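/- Let (X, μ, T) be an ergodic measure-preserving system of positive entropy h. Then for each sufficiently large r ∈ ℕ there exists a measurable set F ⊆ X of positive measure such that the first return time R_F takes only the two values r and r+1 μ_F-almost everywhere (a 'semiperiodic r-marker'). -/

import Mathlib

open MeasureTheory ProbabilityTheory

/-- The first return time `R_F(y) = min{i > 0 : T^i y ∈ F}`. -/
noncomputable def returnTime {X : Type*} (T : X → X) (F : Set X) (x : X) : ℕ :=
  sInf {i | 0 < i ∧ T^[i] x ∈ F}

/-- Block entropy `H(⋁_{j<m} T^{-j}P)` of a finite partition `P` (in bits). -/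
noncomputable def partBlockEntropy {X : Type*} [MeasurableSpace X] (μ : Measure X)
    (T : X → X) {N : ℕ} (P : Fin N → Set X) (m : ℕ) : ℝ :=
  -∑ w : Fin m → Fin N,
      ((μ (⋂ j : Fin m, T^[(j : ℕ)] ⁻¹' P (w j))).toReal *
        Real.logb 2 (μ (⋂ j : Fin m, T^[(j : ℕ)] ⁻¹' P (w j))).toReal)

namespace Stmt11

/-! ### Arithmetic of the marker pattern -/

def vv (r R : ℕ) : ℕ := r - 1 - (R - 1) % r
def DD (r R : ℕ) : ℕ := (r - vv r R) % r
def rt (r R : ℕ) : ℕ := vv r R + DD r R * (r + 1)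
def mstar (r R : ℕ) : ℕ := r * ((R - 1) / r)

/-- membership in the marker pattern -/
def Mem (r R φ : ℕ) : Prop :=
  (∃ j, j ≤ DD r R ∧ φ = vv r R + j * (r + 1)) ∨ (∃ k, φ = rt r R + k * r)

variable {r R R' φ ψ : ℕ}

lemma rt_def : rt r R = vv r R + DD r R * (r + 1) := rfl

lemma vv_lt (hr : 0 < r) : vv r R < r := by
  have : vv r R ≤ r - 1 := Nat.sub_le _ _
  omega

lemma vv_add_mod (hr : 0 < r) : vv r R + (R - 1) % r = r - 1 := by
  have h := Nat.mod_lt (R - 1) hr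
  unfold vv; omega

lemma DD_lt (hr : 0 < r) : DD r R < r := Nat.mod_lt _ hr

lemma dvd_vv_add_DD (hr : 0 < r) : r ∣ vv r R + DD r R := by
  rcases Nat.eq_zero_or_pos (vv r R) with h | h
  · rw [h]; unfold DD; rw [h]
    simp [Nat.mod_self]
  · have h1 : vv r R < r := vv_lt hr
    have h2 : DD r R = r - vv r R := by
      unfold DD; exact Nat.mod_eq_of_lt (by omega)
    rw [h2]
    have : vv r R + (r - vv r R) = r := by omega
    rw [this]

lemma dvd_rt (hr : 0 < r) : r ∣ rt r R := by
  have h1 : rt r R = (vv r R + DD r R) + DD r R * r := by rw [rt_def]; ring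
  rw [h1]
  exact Nat.dvd_add (dvd_vv_add_DD hr) (Dvd.intro_left _ rfl)

lemma rt_le (hr : 0 < r) : rt r R + r < (r + 2) ^ 2 := by
  have h1 : vv r R < r := vv_lt hr
  have h2 : DD r R < r := DD_lt hr
  have h3 : DD r R * (r + 1) ≤ (r - 1) * (r + 1) := Nat.mul_le_mul_right _ (by omega)
  have h4 : (r - 1) * (r + 1) + 1 * (r + 1) = r * (r+1) := by
    rw [← Nat.add_mul]
    congr 1
    omega
  have h5 : r * (r + 1) + (3*r + 4) = (r+2)^2 := by ring
  have := rt_def (r := r) (R := R)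
  omega

lemma mem_vv : Mem r R (vv r R) := Or.inl ⟨0, Nat.zero_le _, by simp⟩

lemma mem_ge (h : Mem r R φ) : vv r R ≤ φ := by
  have := rt_def (r := r) (R := R)
  rcases h with ⟨j, _, rfl⟩ | ⟨k, rfl⟩
  · omega
  · omega

/-- predecessor step: from a pattern element strictly above the bottom, there is a
previous element at distance r or r+1, with nothing in between. -/
lemma step_down (hr : 0 < r) (hm : Mem r R φ) (hgt : vv r R < φ) :
    ∃ g, (g = r ∨ g = r + 1) ∧ g ≤ φ ∧ Mem r R (φ - g) ∧
      ∀ ψ, Mem r R ψ → ψ < φ → ψ + g ≤ φ := by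
  have hrt := rt_def (r := r) (R := R)
  rcases le_or_gt φ (rt r R) with hle | hlt
  · -- ramp case, gap r+1
    have hramp : ∃ j, j ≤ DD r R ∧ φ = vv r R + j * (r + 1) := by
      rcases hm with h | ⟨k, hk⟩
      · exact h
      · exact ⟨DD r R, le_refl _, by omega⟩
    obtain ⟨j, hjD, hjφ⟩ := hramp
    have hj1 : 1 ≤ j := by
      rcases Nat.eq_zero_or_pos j with h | h
      · subst h; simp at hjφ; omega
      · exact h
    have hjsplit : (j - 1) * (r + 1) + 1 * (r + 1) = j * (r+1) := by
      rw [← Nat.add_mul]; congr 1; omega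
    refine ⟨r + 1, Or.inr rfl, by omega, ?_, ?_⟩
    · exact Or.inl ⟨j - 1, by omega, by omega⟩
    · intro ψ hψ hψlt
      rcases hψ with ⟨j', hj'D, rfl⟩ | ⟨k', rfl⟩
      · have hj'j : j' < j := by
          by_contra hcon
          have : j * (r+1) ≤ j' * (r+1) := Nat.mul_le_mul_right _ (by omega)
          omega
        have : (j' + 1) * (r + 1) ≤ j * (r + 1) := Nat.mul_le_mul_right _ (by omega)
        have hexp : (j' + 1) * (r + 1) = j' * (r+1) + (r+1) := by ring
        omega
      · omega
  · -- grid case, gap r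
    have hgrid : ∃ k, 1 ≤ k ∧ φ = rt r R + k * r := by
      rcases hm with ⟨j, hjD, rfl⟩ | ⟨k, hk⟩
      · exfalso
        have : j * (r+1) ≤ DD r R * (r+1) := Nat.mul_le_mul_right _ hjD
        omega
      · refine ⟨k, ?_, hk⟩
        rcases Nat.eq_zero_or_pos k with h | h
        · subst h; simp at hk; omega
        · exact h
    obtain ⟨k, hk1, hkφ⟩ := hgrid
    have hksplit : (k - 1) * r + 1 * r = k * r := by
      rw [← Nat.add_mul]; congr 1; omega
    have hkr : 1 * r ≤ k * r := Nat.mul_le_mul_right _ hk1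
    refine ⟨r, Or.inl rfl, by omega, ?_, ?_⟩
    · exact Or.inr ⟨k - 1, by omega⟩
    · intro ψ hψ hψlt
      rcases hψ with ⟨j', hj'D, rfl⟩ | ⟨k', rfl⟩
      · have : j' * (r+1) ≤ DD r R * (r+1) := Nat.mul_le_mul_right _ hj'D
        omega
      · have hk'k : k' < k := by
          by_contra hcon
          have : k * r ≤ k' * r := Nat.mul_le_mul_right _ (by omega)
          omega
        have : (k' + 1) * r ≤ k * r := Nat.mul_le_mul_right _ (by omega)
        have hexp : (k' + 1) * r = k' * r + r := by ring
        omega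

lemma mstar_facts (hr : 0 < r) (hR : 0 < R) :
    mstar r R < R ∧ R - mstar r R ≤ r ∧ vv r R + (R - mstar r R) = r := by
  have h := Nat.div_add_mod (R - 1) r
  have h2 := Nat.mod_lt (R - 1) hr
  have h3 := vv_add_mod (r := r) (R := R) hr
  unfold mstar
  omega

lemma mstar_mem (hr : 0 < r) (h : rt r R' ≤ mstar r R) : Mem r R' (mstar r R) := by
  obtain ⟨c, hc⟩ := dvd_rt (R := R') hr
  have hle : c ≤ (R-1)/r := by
    by_contra hcon
    have h1 : r * ((R-1)/r + 1) ≤ r * c := Nat.mul_le_mul_left _ (by omega)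
    have h2 : r * ((R-1)/r + 1) = r * ((R-1)/r) + r := by ring
    unfold mstar at h
    omega
  refine Or.inr ⟨(R-1)/r - c, ?_⟩
  have key : ((R-1)/r - c) * r + c * r = (R-1)/r * r := by
    rw [← Nat.add_mul]; congr 1; omega
  have hc' : rt r R' = c * r := by rw [hc]; ring
  unfold mstar
  have : r * ((R-1)/r) = (R-1)/r * r := by ring
  omega

lemma mstar_max (hr : 0 < r) (h : rt r R' ≤ mstar r R) (hψ : Mem r R' ψ)
    (hle : ψ ≤ R - 1) : ψ ≤ mstar r R := by
  have hrt := rt_def (r := r) (R := R')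
  rcases hψ with ⟨j, hjD, rfl⟩ | ⟨k, rfl⟩
  · have : j * (r+1) ≤ DD r R' * (r+1) := Nat.mul_le_mul_right _ hjD
    omega
  · obtain ⟨c, hc⟩ := dvd_rt (R := R') hr
    have hψr : rt r R' + k * r = (c + k) * r := by rw [hc]; ring
    have hck : c + k ≤ (R-1)/r := by
      rw [Nat.le_div_iff_mul_le hr]
      omega
    have : (c + k) * r ≤ (R-1)/r * r := Nat.mul_le_mul_right _ hck
    unfold mstar
    have hcomm : r * ((R-1)/r) = (R-1)/r * r := by ring
    omega


open MeasureTheory ProbabilityTheory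





variable {X : Type*} {T : X → X} {A : Set X} {x : X} {r : ℕ}

/-- every forward iterate eventually hits `A` -/
def Good (T : X → X) (A : Set X) (x : X) : Prop := ∀ t : ℕ, ∃ k : ℕ, T^[k + t] x ∈ A

noncomputable def hitT (T : X → X) (A : Set X) (x : X) : ℕ := sInf {k | T^[k] x ∈ A}

lemma good_shift (h : Good T A x) (s : ℕ) : Good T A (T^[s] x) := by
  intro t
  obtain ⟨k, hk⟩ := h (t + s)
  refine ⟨k, ?_⟩
  rw [← Function.iterate_add_apply]
  have : k + t + s = k + (t + s) := by omega
  rw [this]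
  exact hk

lemma good_nonempty (h : Good T A x) : {k | T^[k] x ∈ A}.Nonempty := by
  obtain ⟨k, hk⟩ := h 0
  exact ⟨k, by simpa using hk⟩

lemma hit_spec (h : Good T A x) : T^[hitT T A x] x ∈ A := Nat.sInf_mem (good_nonempty h)

lemma hit_min {k : ℕ} (hk : k < hitT T A x) : T^[k] x ∉ A := Nat.notMem_of_lt_sInf hk

lemma hit_le {k : ℕ} (hk : T^[k] x ∈ A) : hitT T A x ≤ k := Nat.sInf_le hk

lemma hit_eq {n : ℕ} (hm : T^[n] x ∈ A) (hmin : ∀ k, k < n → T^[k] x ∉ A) :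
    hitT T A x = n := by
  have h1 := hit_le hm
  rcases lt_or_eq_of_le h1 with h | h
  · exact absurd (Nat.sInf_mem (⟨n, hm⟩ : {k | T^[k] x ∈ A}.Nonempty)) (hmin _ h)
  · exact h

lemma hit_shift (h : Good T A x) {s : ℕ} (hs : s ≤ hitT T A x) :
    hitT T A (T^[s] x) = hitT T A x - s := by
  apply hit_eq
  · rw [← Function.iterate_add_apply]
    rw [Nat.sub_add_cancel hs]
    exact hit_spec h
  · intro k hk
    rw [← Function.iterate_add_apply]
    exact hit_min (by omega)

lemma ret_nonempty (hx : x ∈ A) (hG : Good T A x) :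
    {i | 0 < i ∧ T^[i] x ∈ A}.Nonempty := by
  obtain ⟨k, hk⟩ := hG 1
  exact ⟨k + 1, by omega, hk⟩

lemma ret_spec (hx : x ∈ A) (hG : Good T A x) :
    0 < returnTime T A x ∧ T^[returnTime T A x] x ∈ A :=
  Nat.sInf_mem (ret_nonempty hx hG)

lemma ret_min {i : ℕ} (hi : 0 < i) (hlt : i < returnTime T A x) : T^[i] x ∉ A := by
  intro hmem
  exact Nat.notMem_of_lt_sInf hlt ⟨hi, hmem⟩

lemma hit_after (hx : x ∈ A) (hG : Good T A x) {s : ℕ} (hs1 : 1 ≤ s)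
    (hs2 : s ≤ returnTime T A x) :
    hitT T A (T^[s] x) = returnTime T A x - s := by
  apply hit_eq
  · rw [← Function.iterate_add_apply, Nat.sub_add_cancel hs2]
    exact (ret_spec hx hG).2
  · intro k hk
    rw [← Function.iterate_add_apply]
    exact ret_min (by omega) (by omega)

/-- the semiperiodic marker set -/
def Fset (T : X → X) (A : Set X) (r : ℕ) : Set X :=
  {x | Good T A x ∧ Mem r (returnTime T A (T^[hitT T A x] x)) (hitT T A x)}

lemma ret_ge (hdis : ∀ i, 0 < i → i < (r+2)^2 → ∀ a ∈ A, T^[i] a ∉ A)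
    (hx : x ∈ A) (hG : Good T A x) : (r+2)^2 ≤ returnTime T A x := by
  by_contra hcon
  obtain ⟨h1, h2⟩ := ret_spec hx hG
  exact hdis _ h1 (by omega) x hx h2

lemma r_le_L : r ≤ (r+2)^2 := by nlinarith

/-- Main combinatorial step: from any marker point, the next marker point is at
distance exactly r or r+1. -/
theorem next_mark (hr : 0 < r)
    (hdis : ∀ i, 0 < i → i < (r+2)^2 → ∀ a ∈ A, T^[i] a ∉ A)
    (hx : x ∈ Fset T A r) :
    ∃ g, (g = r ∨ g = r + 1) ∧ T^[g] x ∈ Fset T A r ∧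
      ∀ i, 0 < i → i < g → T^[i] x ∉ Fset T A r := by
  obtain ⟨hG, hmem⟩ := hx
  set φ := hitT T A x with hφ
  set a := T^[φ] x with ha'
  have ha : a ∈ A := hit_spec hG
  have hGa : Good T A a := good_shift hG φ
  set R := returnTime T A a with hR'
  have hRL : (r+2)^2 ≤ R := ret_ge hdis ha hGa
  have hrL : r ≤ (r+2)^2 := r_le_L
  have hRpos : 0 < R := by omega
  rcases lt_or_eq_of_le (mem_ge hmem) with hcase | hcase
  · -- above the bottom of the pattern: interior step
    obtain ⟨g, hgor, hgle, hpmem, hexcl⟩ := step_down hr hmem hcase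
    have hgpos : 0 < g := by omega
    refine ⟨g, hgor, ⟨good_shift hG g, ?_⟩, ?_⟩
    · have h1 : hitT T A (T^[g] x) = φ - g := hit_shift hG hgle
      have h2 : T^[φ - g] (T^[g] x) = a := by
        rw [ha', ← Function.iterate_add_apply, Nat.sub_add_cancel hgle]
      rw [h1, h2, ← hR']
      exact hpmem
    · intro i hi0 hig hFi
      obtain ⟨_, hmemi⟩ := hFi
      have hiφ : i ≤ φ := by omega
      have h1 : hitT T A (T^[i] x) = φ - i := hit_shift hG hiφ
      have h2 : T^[φ - i] (T^[i] x) = a := by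
        rw [ha', ← Function.iterate_add_apply, Nat.sub_add_cancel hiφ]
      rw [h1, h2, ← hR'] at hmemi
      have := hexcl (φ - i) hmemi (by omega)
      omega
  · -- at the bottom of the pattern: junction step of length exactly r
    have hφv : φ = vv r R := hcase.symm
    have hvr : vv r R < r := vv_lt hr
    obtain ⟨hm1, hm2, hm3⟩ := mstar_facts (r := r) (R := R) hr hRpos
    set s' := R - mstar r R with hs'
    have hs'1 : 1 ≤ s' := by omega
    have hgr : φ + s' = r := by omega
    set a2 := T^[R] a with ha2'
    have ha2 : a2 ∈ A := (ret_spec ha hGa).2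
    have hGa2 : Good T A a2 := good_shift hGa R
    set R2 := returnTime T A a2 with hR2'
    have hrt2 : rt r R2 ≤ mstar r R := by
      have := rt_le (r := r) (R := R2) hr
      omega
    refine ⟨r, Or.inl rfl, ⟨good_shift hG r, ?_⟩, ?_⟩
    · have hgs : T^[r] x = T^[s'] a := by
        rw [ha', ← Function.iterate_add_apply]
        congr 1
        omega
      have h1 : hitT T A (T^[r] x) = mstar r R := by
        rw [hgs, hit_after ha hGa hs'1 (by omega)]
        omega
      have h2 : T^[mstar r R] (T^[r] x) = a2 := by
        rw [hgs, ← Function.iterate_add_apply, ha2']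
        congr 1
        omega
      rw [h1, h2, ← hR2']
      exact mstar_mem hr hrt2
    · intro i hi0 hir hFi
      obtain ⟨_, hmemi⟩ := hFi
      rcases le_or_gt i φ with hiφ | hiφ
      · have h1 : hitT T A (T^[i] x) = φ - i := hit_shift hG hiφ
        have h2 : T^[φ - i] (T^[i] x) = a := by
          rw [ha', ← Function.iterate_add_apply, Nat.sub_add_cancel hiφ]
        rw [h1, h2, ← hR'] at hmemi
        have := mem_ge hmemi
        omega
      · set s := i - φ with hsdef
        have hs1 : 1 ≤ s := by omega
        have hss' : s < s' := by omega
        have hsR : s ≤ R := by omega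
        have hgs : T^[i] x = T^[s] a := by
          rw [ha', ← Function.iterate_add_apply]
          congr 1
          omega
        have h1 : hitT T A (T^[i] x) = R - s := by
          rw [hgs, hit_after ha hGa hs1 hsR]
        have h2 : T^[R - s] (T^[i] x) = a2 := by
          rw [hgs, ← Function.iterate_add_apply, ha2']
          congr 1
          omega
        rw [h1, h2, ← hR2'] at hmemi
        have := mstar_max hr hrt2 hmemi (by omega : R - s ≤ R - 1)
        omega

theorem returnTime_Fset (hr : 0 < r)
    (hdis : ∀ i, 0 < i → i < (r+2)^2 → ∀ a ∈ A, T^[i] a ∉ A)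
    (hx : x ∈ Fset T A r) :
    returnTime T (Fset T A r) x = r ∨ returnTime T (Fset T A r) x = r + 1 := by
  obtain ⟨g, hgor, hgF, hmin⟩ := next_mark hr hdis hx
  have hgpos : 0 < g := by omega
  have hgmem : g ∈ {i | 0 < i ∧ T^[i] x ∈ Fset T A r} := ⟨hgpos, hgF⟩
  have heq : returnTime T (Fset T A r) x = g := by
    have h1 : returnTime T (Fset T A r) x ≤ g := Nat.sInf_le hgmem
    rcases lt_or_eq_of_le h1 with h | h
    · exfalso
      have hsm := Nat.sInf_mem (⟨g, hgmem⟩ : {i | 0 < i ∧ T^[i] x ∈ Fset T A r}.Nonempty)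
      exact hmin _ hsm.1 h hsm.2
    · exact h
  rw [heq]
  exact hgor

/-- every good point has a marker point ahead on its orbit -/
theorem good_subset_union (hr : 0 < r)
    (hdis : ∀ i, 0 < i → i < (r+2)^2 → ∀ a ∈ A, T^[i] a ∉ A)
    (hG : Good T A x) : ∃ t : ℕ, T^[t] x ∈ Fset T A r := by
  set φ0 := hitT T A x with hφ0
  set b0 := T^[φ0] x with hb0
  have hb0A : b0 ∈ A := hit_spec hG
  have hGb0 : Good T A b0 := good_shift hG φ0
  set R0 := returnTime T A b0 with hR0
  have hR0L : (r+2)^2 ≤ R0 := ret_ge hdis hb0A hGb0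
  set b1 := T^[R0] b0 with hb1
  have hb1A : b1 ∈ A := (ret_spec hb0A hGb0).2
  have hGb1 : Good T A b1 := good_shift hGb0 R0
  set R1 := returnTime T A b1 with hR1
  have hv : vv r R1 < r := vv_lt hr
  have hrL : r ≤ (r+2)^2 := r_le_L
  set s := R0 - vv r R1 with hs
  have hs1 : 1 ≤ s := by omega
  have hsR : s ≤ R0 := by omega
  refine ⟨φ0 + s, good_shift hG _, ?_⟩
  have hgs : T^[φ0 + s] x = T^[s] b0 := by
    rw [hb0, ← Function.iterate_add_apply]
    congr 1
    omega
  have h1 : hitT T A (T^[φ0 + s] x) = vv r R1 := by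
    rw [hgs, hit_after hb0A hGb0 hs1 hsR]
    omega
  have h2 : T^[vv r R1] (T^[φ0 + s] x) = b1 := by
    rw [hgs, ← Function.iterate_add_apply, hb1]
    congr 1
    omega
  rw [h1, h2, ← hR1]
  exact mem_vv


open MeasureTheory ProbabilityTheory Set Filter
open scoped ENNReal NNReal

variable {X : Type*} [MeasurableSpace X] {T : X → X} {A : Set X} {r : ℕ}

/-! ### Measurability -/

lemma measurable_natSInf {p : ℕ → X → Prop} (hp : ∀ n, MeasurableSet {x | p n x}) :
    Measurable (fun x => sInf {n | p n x}) := by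
  apply measurable_to_countable'
  intro n
  by_cases hn : n = 0
  · subst hn
    have heq : (fun x => sInf {n | p n x}) ⁻¹' {0} = {x | p 0 x} ∪ ⋂ k, {x | p k x}ᶜ := by
      ext x
      simp only [Set.mem_preimage, Set.mem_singleton_iff, Set.mem_union, Set.mem_iInter,
        Set.mem_compl_iff, Set.mem_setOf_eq]
      constructor
      · intro h
        by_cases hne : {n | p n x}.Nonempty
        · left
          have := Nat.sInf_mem hne
          rwa [h] at this
        · right
          intro k hk
          exact hne ⟨k, hk⟩
      · rintro (h | h)
        · have := Nat.sInf_le (s := {n | p n x}) h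
          omega
        · have : {n | p n x} = ∅ := by
            ext k; simp only [Set.mem_setOf_eq, Set.mem_empty_iff_false, iff_false]; exact h k
          rw [this, Nat.sInf_empty]
    rw [heq]
    exact (hp 0).union (MeasurableSet.iInter fun k => (hp k).compl)
  · have heq : (fun x => sInf {n | p n x}) ⁻¹' {n} =
        {x | p n x} ∩ ⋂ (k) (_ : k < n), {x | p k x}ᶜ := by
      ext x
      simp only [Set.mem_preimage, Set.mem_singleton_iff, Set.mem_inter_iff, Set.mem_iInter,
        Set.mem_compl_iff, Set.mem_setOf_eq]
      constructor
      · intro h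
        have hne : {m | p m x}.Nonempty := by
          by_contra hne
          have h0 : {m | p m x} = ∅ := Set.not_nonempty_iff_eq_empty.1 hne
          rw [h0, Nat.sInf_empty] at h
          exact hn h.symm
        have h1 := Nat.sInf_mem hne
        rw [h] at h1
        refine ⟨h1, fun k hk => ?_⟩
        have hlt : k < sInf {m | p m x} := by rw [h]; exact hk
        exact Nat.notMem_of_lt_sInf hlt
      · rintro ⟨h1, h2⟩
        have hne : {m | p m x}.Nonempty := ⟨n, h1⟩
        have hmem := Nat.sInf_mem hne
        have hle : sInf {m | p m x} ≤ n := Nat.sInf_le h1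
        rcases lt_or_eq_of_le hle with h | h
        · exact absurd hmem (h2 _ h)
        · exact h
    rw [heq]
    exact (hp n).inter (MeasurableSet.iInter fun k => MeasurableSet.iInter fun _ => (hp k).compl)

lemma measurable_hitT (hT : Measurable T) (hA : MeasurableSet A) :
    Measurable (hitT T A) :=
  measurable_natSInf (fun n => hA.preimage (hT.iterate n))

lemma measurable_returnTime (hT : Measurable T) (hA : MeasurableSet A) :
    Measurable (returnTime T A) := by
  apply measurable_natSInf (p := fun n x => 0 < n ∧ T^[n] x ∈ A)
  intro n
  by_cases hn : 0 < n
  · have h : {x | 0 < n ∧ T^[n] x ∈ A} = (T^[n]) ⁻¹' A := by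
      ext x; simp [hn]
    rw [h]
    exact hA.preimage (hT.iterate n)
  · have h : {x | 0 < n ∧ T^[n] x ∈ A} = ∅ := by
      ext x; simp [hn]
    rw [h]
    exact MeasurableSet.empty

lemma measurable_goodSet (hT : Measurable T) (hA : MeasurableSet A) :
    MeasurableSet {x | Good T A x} := by
  have heq : {x | Good T A x} = ⋂ t : ℕ, ⋃ k : ℕ, (T^[k + t]) ⁻¹' A := by
    ext x
    simp only [Set.mem_setOf_eq, Good, Set.mem_iInter, Set.mem_iUnion, Set.mem_preimage]
  rw [heq]
  exact MeasurableSet.iInter fun t => MeasurableSet.iUnion fun k => hA.preimage (hT.iterate _)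

lemma measurable_Fset (hT : Measurable T) (hA : MeasurableSet A) :
    MeasurableSet (Fset T A r) := by
  have heq : Fset T A r = {x | Good T A x} ∩
      ⋃ n : ℕ, ((hitT T A) ⁻¹' {n} ∩
        (T^[n]) ⁻¹' ((returnTime T A) ⁻¹' {R | Mem r R n})) := by
    ext x
    simp only [Fset, Set.mem_setOf_eq, Set.mem_inter_iff, Set.mem_iUnion, Set.mem_preimage,
      Set.mem_singleton_iff]
    constructor
    · rintro ⟨hG, hm⟩
      exact ⟨hG, hitT T A x, rfl, hm⟩
    · rintro ⟨hG, n, hn, hm⟩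
      subst hn
      exact ⟨hG, hm⟩
  rw [heq]
  refine (measurable_goodSet hT hA).inter (MeasurableSet.iUnion fun n => ?_)
  refine ((measurable_hitT hT hA) (MeasurableSet.singleton n)).inter ?_
  exact ((measurable_returnTime hT hA).comp (hT.iterate n)) trivial

/-! ### Ergodic-theoretic facts -/

variable {μ : Measure X} [IsProbabilityMeasure μ]

lemma full_of_invariant (hTe : Ergodic T μ) {U : Set X} (hU : MeasurableSet U)
    (hd : μ (U \ T ⁻¹' U) = 0) (hpos : μ U ≠ 0) : μ U = 1 := by
  have h1 : μ (T ⁻¹' U) = μ U :=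
    hTe.toMeasurePreserving.measure_preimage hU.nullMeasurableSet
  have hUm : μ (U ∩ T ⁻¹' U) + μ (U \ T ⁻¹' U) = μ U :=
    measure_inter_add_diff U (hU.preimage hTe.toMeasurePreserving.measurable)
  have hTm : μ (T ⁻¹' U ∩ U) + μ (T ⁻¹' U \ U) = μ (T ⁻¹' U) :=
    measure_inter_add_diff _ hU
  have hcomm : μ (T ⁻¹' U ∩ U) = μ (U ∩ T ⁻¹' U) := by rw [Set.inter_comm]
  have hfin : μ U ≠ ⊤ := measure_ne_top μ U
  have hd2 : μ (T ⁻¹' U \ U) = 0 := by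
    rw [hcomm, h1] at hTm
    rw [hd, add_zero] at hUm
    rw [hUm] at hTm
    have h3 := (ENNReal.add_right_inj hfin (b := μ (T ⁻¹' U \ U)) (c := 0))
    rw [add_zero] at h3
    exact h3.1 hTm
  have hae : T ⁻¹' U =ᵐ[μ] U := by
    rw [MeasureTheory.ae_eq_set]
    exact ⟨hd2, hd⟩
  rcases hTe.quasiErgodic.ae_empty_or_univ₀ hU.nullMeasurableSet hae with h | h
  · exact absurd (by rw [measure_congr h]; simp) hpos
  · rw [measure_congr h]; simp

lemma good_full (hTe : Ergodic T μ) (hA : MeasurableSet A) (hpos : μ A ≠ 0) :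
    μ {x | Good T A x} = 1 := by
  have hT : Measurable T := hTe.toMeasurePreserving.measurable
  set Hit := ⋃ k : ℕ, (T^[k]) ⁻¹' A with hHit
  have hHitm : MeasurableSet Hit :=
    MeasurableSet.iUnion fun k => hA.preimage (hT.iterate k)
  have hsub : Hit \ T ⁻¹' Hit ⊆ A \ T ⁻¹' Hit := by
    rintro x ⟨hxH, hxn⟩
    refine ⟨?_, hxn⟩
    rcases Set.mem_iUnion.1 hxH with ⟨k, hk⟩
    rcases Nat.eq_zero_or_pos k with h | h
    · subst h; simpa using hk
    · exfalso
      apply hxn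
      refine Set.mem_iUnion.2 ⟨k - 1, ?_⟩
      show T^[k-1] (T x) ∈ A
      rw [← Function.iterate_succ_apply, Nat.succ_eq_add_one]
      have hkk : k - 1 + 1 = k := by omega
      rw [hkk]
      exact hk
  have hconsnull : μ (A \ T ⁻¹' Hit) = 0 := by
    have hcons : Conservative T μ := hTe.toMeasurePreserving.conservative
    have hae := hcons.ae_mem_imp_frequently_image_mem hA.nullMeasurableSet
    rw [MeasureTheory.ae_iff] at hae
    apply measure_mono_null _ hae
    rintro x ⟨hxA, hxn⟩
    show ¬ (x ∈ A → ∃ᶠ n in atTop, T^[n] x ∈ A)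
    intro himp
    have hfreq := himp hxA
    rw [Filter.frequently_atTop] at hfreq
    obtain ⟨n, hn1, hmem⟩ := hfreq 1
    apply hxn
    refine Set.mem_iUnion.2 ⟨n - 1, ?_⟩
    show T^[n-1] (T x) ∈ A
    rw [← Function.iterate_succ_apply, Nat.succ_eq_add_one]
    have hnn : n - 1 + 1 = n := by omega
    rw [hnn]
    exact hmem
  have hd : μ (Hit \ T ⁻¹' Hit) = 0 := measure_mono_null hsub hconsnull
  have hHit1 : μ Hit = 1 := by
    apply full_of_invariant hTe hHitm hd
    intro h0
    apply hpos
    have hsub2 : A ⊆ Hit := by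
      intro x hx
      exact Set.mem_iUnion.2 ⟨0, by simpa using hx⟩
    have hmm := measure_mono (μ := μ) hsub2
    rw [h0] at hmm
    exact le_antisymm hmm (zero_le)
  have hGeq : {x | Good T A x} = ⋂ t : ℕ, (T^[t]) ⁻¹' Hit := by
    ext x
    simp only [Set.mem_setOf_eq, Good, Set.mem_iInter, Set.mem_preimage, hHit,
      Set.mem_iUnion]
    constructor
    · intro h t
      obtain ⟨k, hk⟩ := h t
      exact ⟨k, by rwa [← Function.iterate_add_apply]⟩
    · intro h t
      obtain ⟨k, hk⟩ := h t
      exact ⟨k, by rwa [Function.iterate_add_apply]⟩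
  rw [hGeq]
  have hfull : ∀ t : ℕ, μ ((T^[t]) ⁻¹' Hit) = 1 := by
    intro t
    rw [(hTe.toMeasurePreserving.iterate t).measure_preimage hHitm.nullMeasurableSet]
    exact hHit1
  have hmeas : ∀ t : ℕ, MeasurableSet ((T^[t]) ⁻¹' Hit) :=
    fun t => hHitm.preimage (hT.iterate t)
  have hcompl : μ (⋂ t : ℕ, (T^[t]) ⁻¹' Hit)ᶜ = 0 := by
    rw [Set.compl_iInter]
    apply measure_iUnion_null
    intro t
    rw [measure_compl (hmeas t) (measure_ne_top μ _), hfull t, measure_univ, tsub_self]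
  exact (prob_compl_eq_zero_iff (MeasurableSet.iInter fun t => hmeas t)).1 hcompl

lemma exists_base (hTe : Ergodic T μ) {L : ℕ} (hL : 0 < L)
    (hB : ∃ B : Set X, MeasurableSet B ∧ 0 < μ B ∧ μ B < ((L : ℝ≥0∞) + 1)⁻¹) :
    ∃ A : Set X, MeasurableSet A ∧ 0 < μ A ∧
      ∀ i, 0 < i → i < L → ∀ a ∈ A, T^[i] a ∉ A := by
  obtain ⟨B, hBm, hB0, hBs⟩ := hB
  have hT : Measurable T := hTe.toMeasurePreserving.measurable
  set A := B \ ⋃ (i : ℕ) (_ : 0 < i ∧ i < L), (T^[i]) ⁻¹' B with hA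
  have hAm : MeasurableSet A :=
    hBm.diff (MeasurableSet.iUnion fun i => MeasurableSet.iUnion fun _ =>
      hBm.preimage (hT.iterate i))
  have hdis : ∀ i, 0 < i → i < L → ∀ a ∈ A, T^[i] a ∉ A := by
    rintro i hi0 hiL a ⟨haB, haU⟩ ⟨hTaB, -⟩
    exact haU (Set.mem_iUnion.2 ⟨i, Set.mem_iUnion.2 ⟨⟨hi0, hiL⟩, hTaB⟩⟩)
  refine ⟨A, hAm, ?_, hdis⟩
  by_contra h0
  have hA0 : μ A = 0 := by
    simpa [pos_iff_ne_zero, not_not] using h0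
  set U := ⋃ i ∈ Finset.range L, (T^[i]) ⁻¹' B with hU
  have hUm : MeasurableSet U :=
    MeasurableSet.biUnion (Finset.range L).countable_toSet
      (fun i _ => hBm.preimage (hT.iterate i))
  have hnomem : ∀ x, x ∉ T ⁻¹' U → ∀ j, 1 ≤ j → j ≤ L → T^[j] x ∉ B := by
    intro x hxn j hj1 hjL hmem
    apply hxn
    show T x ∈ U
    refine Set.mem_biUnion (Finset.mem_range.2 (by omega : j - 1 < L)) ?_
    show T^[j-1] (T x) ∈ B
    rw [← Function.iterate_succ_apply, Nat.succ_eq_add_one]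
    have hjj : j - 1 + 1 = j := by omega
    rw [hjj]
    exact hmem
  have hsub : U \ T ⁻¹' U ⊆ A := by
    rintro x ⟨hxU, hxn⟩
    obtain ⟨i, hi, hxB⟩ := Set.mem_iUnion₂.1 hxU
    have hiL : i < L := Finset.mem_range.1 hi
    have hi0 : i = 0 := by
      by_contra hcon
      exact hnomem x hxn i (by omega) (by omega) hxB
    subst hi0
    have hxB' : x ∈ B := by simpa using hxB
    refine ⟨hxB', ?_⟩
    intro hmem
    obtain ⟨i', hi'⟩ := Set.mem_iUnion.1 hmem
    obtain ⟨⟨hi'0, hi'L⟩, hi'B⟩ := Set.mem_iUnion.1 hi'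
    exact hnomem x hxn i' (by omega) (by omega) hi'B
  have hd : μ (U \ T ⁻¹' U) = 0 := measure_mono_null hsub hA0
  have hU0 : μ U ≠ 0 := by
    intro h
    have hsub2 : B ⊆ U := by
      intro x hx
      refine Set.mem_biUnion (Finset.mem_range.2 hL) ?_
      simpa using hx
    have hle := measure_mono (μ := μ) hsub2
    rw [h] at hle
    exact absurd (le_antisymm hle (zero_le)) (ne_of_gt hB0)
  have hU1 : μ U = 1 := full_of_invariant hTe hUm hd hU0
  have hUle : μ U ≤ (L : ℝ≥0∞) * μ B := by
    calc μ U ≤ ∑ i ∈ Finset.range L, μ ((T^[i]) ⁻¹' B) :=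
          measure_biUnion_finset_le _ _
      _ = ∑ i ∈ Finset.range L, μ B := by
          apply Finset.sum_congr rfl
          intro i _
          exact (hTe.toMeasurePreserving.iterate i).measure_preimage hBm.nullMeasurableSet
      _ = (L : ℝ≥0∞) * μ B := by
          rw [Finset.sum_const, Finset.card_range, nsmul_eq_mul]
  have hL0 : (L : ℝ≥0∞) ≠ 0 := Nat.cast_ne_zero.2 (by omega)
  have hlt : (L : ℝ≥0∞) * μ B < 1 := by
    have h1 : (L : ℝ≥0∞) * μ B < (L : ℝ≥0∞) * ((L : ℝ≥0∞) + 1)⁻¹ :=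
      ENNReal.mul_lt_mul_right hL0 (ENNReal.natCast_ne_top L) hBs
    have h2 : (L : ℝ≥0∞) * ((L : ℝ≥0∞) + 1)⁻¹ ≤ 1 := by
      have h3 : (L : ℝ≥0∞) ≤ (L : ℝ≥0∞) + 1 := le_self_add
      calc (L : ℝ≥0∞) * ((L : ℝ≥0∞) + 1)⁻¹ ≤ ((L : ℝ≥0∞) + 1) * ((L : ℝ≥0∞) + 1)⁻¹ :=
            mul_le_mul_left h3 _
        _ = 1 := ENNReal.mul_inv_cancel (by simp) (by simp)
    exact lt_of_lt_of_le h1 h2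
  rw [hU1] at hUle
  exact absurd (lt_of_le_of_lt hUle hlt) (lt_irrefl 1)


/-! ### Entropy gives arbitrarily small positive-measure sets -/

lemma entropy_term_le {p : ℝ} (h0 : 0 ≤ p) (h1 : p ≤ 1) : -(p * Real.logb 2 p) ≤ 2 := by
  rcases eq_or_lt_of_le h0 with h | hp
  · rw [← h]; norm_num
  · have hloginv : Real.log p⁻¹ ≤ p⁻¹ - 1 := Real.log_le_sub_one_of_pos (by positivity)
    rw [Real.log_inv] at hloginv
    have h2 : -(p * Real.log p) ≤ 1 - p := by
      have h3 := mul_le_mul_of_nonneg_left hloginv (le_of_lt hp)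
      have h4 : p * p⁻¹ = 1 := mul_inv_cancel₀ (ne_of_gt hp)
      nlinarith
    have hl2 : (0.6931471803 : ℝ) < Real.log 2 := Real.log_two_gt_d9
    unfold Real.logb
    have heq : -(p * (Real.log p / Real.log 2)) = (-(p * Real.log p)) / Real.log 2 := by ring
    rw [heq, div_le_iff₀ (by linarith)]
    nlinarith

variable {μ : Measure X} [IsProbabilityMeasure μ]

lemma toReal_le_one {s : Set X} : (μ s).toReal ≤ 1 := by
  calc (μ s).toReal ≤ (1 : ℝ≥0∞).toReal :=
        ENNReal.toReal_mono (by simp) prob_le_one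
    _ = 1 := by simp

lemma abstract_entropy_bound {ι : Type*} [Fintype ι] {c : ℕ} (cell : ι → Set X)
    (hm : ∀ w, MeasurableSet (cell w))
    (hd : ∀ w w' : ι, w ≠ w' → Disjoint (cell w) (cell w'))
    (hcon : ∀ B : Set X, MeasurableSet B → 0 < μ B → ((c : ℝ≥0∞) + 1)⁻¹ ≤ μ B) :
    -∑ w : ι, ((μ (cell w)).toReal * Real.logb 2 (μ (cell w)).toReal) ≤ 2 * (c + 1) := by
  classical
  set S : Finset ι := Finset.univ.filter (fun w => μ (cell w) ≠ 0) with hS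
  have hSlow : ∀ w ∈ S, ((c : ℝ≥0∞) + 1)⁻¹ ≤ μ (cell w) := by
    intro w hw
    have hne : μ (cell w) ≠ 0 := (Finset.mem_filter.1 hw).2
    exact hcon (cell w) (hm w) (pos_iff_ne_zero.2 hne)
  have hsum : ∑ w ∈ S, μ (cell w) ≤ 1 := by
    rw [← measure_biUnion_finset ?_ (fun w _ => hm w)]
    · exact prob_le_one
    · intro w hw w' hw' hne
      exact hd w w' hne
  have hcard1 : (S.card : ℝ≥0∞) * ((c : ℝ≥0∞) + 1)⁻¹ ≤ 1 := by
    calc (S.card : ℝ≥0∞) * ((c : ℝ≥0∞) + 1)⁻¹ = ∑ _w ∈ S, ((c : ℝ≥0∞) + 1)⁻¹ := by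
          rw [Finset.sum_const, nsmul_eq_mul]
      _ ≤ ∑ w ∈ S, μ (cell w) := Finset.sum_le_sum hSlow
      _ ≤ 1 := hsum
  have hcard : S.card ≤ c + 1 := by
    have hc0 : ((c : ℝ≥0∞) + 1) ≠ 0 := by simp
    have hctop : ((c : ℝ≥0∞) + 1) ≠ ⊤ := by
      simp [ENNReal.add_eq_top]
    have h3 : (S.card : ℝ≥0∞) ≤ ((c : ℝ≥0∞) + 1) := by
      have h2 : (S.card : ℝ≥0∞) = (S.card : ℝ≥0∞) * ((c : ℝ≥0∞) + 1)⁻¹ * ((c : ℝ≥0∞) + 1) := by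
        rw [mul_assoc, ENNReal.inv_mul_cancel hc0 hctop, mul_one]
      rw [h2]
      calc (S.card : ℝ≥0∞) * ((c:ℝ≥0∞)+1)⁻¹ * ((c:ℝ≥0∞)+1) ≤ 1 * ((c:ℝ≥0∞)+1) :=
            mul_le_mul_left hcard1 _
        _ = ((c:ℝ≥0∞)+1) := one_mul _
    have h4 : ((S.card : ℕ) : ℝ≥0∞) ≤ ((c + 1 : ℕ) : ℝ≥0∞) := by push_cast; exact h3
    exact_mod_cast h4
  have hterm : ∀ w : ι, -(((μ (cell w)).toReal) * Real.logb 2 ((μ (cell w)).toReal)) ≤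
      (if w ∈ S then (2:ℝ) else 0) := by
    intro w
    by_cases hw : w ∈ S
    · rw [if_pos hw]
      exact entropy_term_le ENNReal.toReal_nonneg toReal_le_one
    · rw [if_neg hw]
      have h0 : μ (cell w) = 0 := by
        by_contra h
        exact hw (Finset.mem_filter.2 ⟨Finset.mem_univ _, h⟩)
      rw [h0]
      simp
  have hneg : -∑ w : ι, ((μ (cell w)).toReal * Real.logb 2 (μ (cell w)).toReal) =
      ∑ w : ι, -(((μ (cell w)).toReal) * Real.logb 2 ((μ (cell w)).toReal)) := by
    rw [← Finset.sum_neg_distrib]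
  rw [hneg]
  calc ∑ w : ι, -(((μ (cell w)).toReal) * Real.logb 2 ((μ (cell w)).toReal))
      ≤ ∑ w : ι, (if w ∈ S then (2:ℝ) else 0) := Finset.sum_le_sum (fun w _ => hterm w)
    _ = ∑ w ∈ S, (2:ℝ) := by rw [Finset.sum_ite_mem, Finset.univ_inter]
    _ = 2 * S.card := by rw [Finset.sum_const, nsmul_eq_mul, mul_comm]
    _ ≤ 2 * (c + 1) := by
        have : (S.card : ℝ) ≤ ((c : ℝ) + 1) := by exact_mod_cast hcard
        linarith

lemma abstract_entropy_nonneg {ι : Type*} [Fintype ι] (cell : ι → Set X) :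
    0 ≤ -∑ w : ι, ((μ (cell w)).toReal * Real.logb 2 (μ (cell w)).toReal) := by
  have h : ∀ w : ι, ((μ (cell w)).toReal * Real.logb 2 (μ (cell w)).toReal) ≤ 0 := by
    intro w
    have h0 : (0:ℝ) ≤ (μ (cell w)).toReal := ENNReal.toReal_nonneg
    have h1 : (μ (cell w)).toReal ≤ 1 := toReal_le_one
    have hlogb : Real.logb 2 (μ (cell w)).toReal ≤ 0 :=
      Real.logb_nonpos (by norm_num) h0 h1
    exact mul_nonpos_iff.2 (Or.inl ⟨h0, hlogb⟩)
  have hsn : ∑ w : ι, ((μ (cell w)).toReal * Real.logb 2 (μ (cell w)).toReal) ≤ 0 :=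
    Finset.sum_nonpos (fun w _ => h w)
  linarith

lemma exists_small_of_pos_entropy (T : X → X) (hT : Measurable T) {N : ℕ} {P : Fin N → Set X}
    (hPm : ∀ i, MeasurableSet (P i)) (hPd : Pairwise (Function.onFun Disjoint P))
    (hlim : 0 < Filter.atTop.liminf (fun m => partBlockEntropy μ T P m / m))
    (c : ℕ) :
    ∃ B : Set X, MeasurableSet B ∧ 0 < μ B ∧ μ B < ((c : ℝ≥0∞) + 1)⁻¹ := by
  by_contra hcon
  push_neg at hcon
  have hcon' : ∀ B : Set X, MeasurableSet B → 0 < μ B → ((c : ℝ≥0∞) + 1)⁻¹ ≤ μ B := by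
    intro B hB h0
    exact hcon B hB h0
  have hkey : ∀ m : ℕ, 0 ≤ partBlockEntropy μ T P m ∧
      partBlockEntropy μ T P m ≤ 2 * (c + 1) := by
    intro m
    constructor
    · exact abstract_entropy_nonneg (fun w : Fin m → Fin N =>
        ⋂ j : Fin m, T^[(j : ℕ)] ⁻¹' P (w j))
    · apply abstract_entropy_bound (fun w : Fin m → Fin N =>
        ⋂ j : Fin m, T^[(j : ℕ)] ⁻¹' P (w j)) ?_ ?_ hcon'
      · intro w
        exact MeasurableSet.iInter fun j => (hPm _).preimage (hT.iterate _)
      · intro w w' hne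
        obtain ⟨j, hj⟩ := Function.ne_iff.1 hne
        have hdj : Disjoint (P (w j)) (P (w' j)) := hPd hj
        have hpre : Disjoint (T^[(j:ℕ)] ⁻¹' P (w j)) (T^[(j:ℕ)] ⁻¹' P (w' j)) :=
          Disjoint.preimage _ hdj
        exact hpre.mono (Set.iInter_subset _ j) (Set.iInter_subset _ j)
  have hf0 : ∀ m : ℕ, 0 ≤ partBlockEntropy μ T P m / m :=
    fun m => div_nonneg (hkey m).1 (Nat.cast_nonneg m)
  have hfle : ∀ m : ℕ, partBlockEntropy μ T P m / m ≤ (2 * (c + 1) : ℝ) / m := by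
    intro m
    rcases Nat.eq_zero_or_pos m with h | h
    · subst h; simp
    · exact (div_le_div_iff_of_pos_right (by exact_mod_cast h)).2 (hkey m).2
  have htop : Filter.Tendsto (fun m : ℕ => (2 * (c + 1) : ℝ) / m) Filter.atTop (nhds 0) :=
    tendsto_const_div_atTop_nhds_zero_nat _
  have htend : Filter.Tendsto (fun m : ℕ => partBlockEntropy μ T P m / m)
      Filter.atTop (nhds 0) :=
    tendsto_of_tendsto_of_tendsto_of_le_of_le tendsto_const_nhds htop hf0 hfle
  rw [htend.liminf_eq] at hlim
  exact lt_irrefl 0 hlim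

end Stmt11

/-- In any ergodic system of positive (Kolmogorov–Sinai) entropy — i.e. admitting a
finite measurable partition whose entropy rate is positive — for every sufficiently
large `r` there is a "semiperiodic `r`-marker": a positive measure set `F` whose
first return time takes only the values `r` and `r+1` (`μ_F`-a.e.). -/
theorem stmt11 {X : Type*} [MeasurableSpace X] (μ : Measure X) [IsProbabilityMeasure μ]
    (T : X → X) (hT : Ergodic T μ)
    (hpos : ∃ (N : ℕ) (P : Fin N → Set X), (∀ i, MeasurableSet (P i)) ∧
      Pairwise (Function.onFun Disjoint P) ∧ (⋃ i, P i) = Set.univ ∧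
      0 < Filter.atTop.liminf (fun m => partBlockEntropy μ T P m / m)) :
    ∃ r₀ : ℕ, ∀ r : ℕ, r₀ ≤ r → ∃ F : Set X, MeasurableSet F ∧ 0 < μ F ∧
      ∀ᵐ y ∂(ProbabilityTheory.cond μ F),
        returnTime T F y = r ∨ returnTime T F y = r + 1 := by
  obtain ⟨N, P, hPm, hPd, _hPc, hlim⟩ := hpos
  have hTm : Measurable T := hT.toMeasurePreserving.measurable
  refine ⟨1, fun r hr1 => ?_⟩
  have hr : 0 < r := hr1
  have hLpos : 0 < (r+2)^2 := by positivity
  obtain ⟨A, hAm, hApos, hdis⟩ := Stmt11.exists_base hT hLpos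
    (Stmt11.exists_small_of_pos_entropy (μ := μ) T hTm hPm hPd hlim ((r+2)^2))
  have hGfull : μ {x | Stmt11.Good T A x} = 1 :=
    Stmt11.good_full hT hAm (ne_of_gt hApos)
  have hFm : MeasurableSet (Stmt11.Fset T A r) := Stmt11.measurable_Fset hTm hAm
  refine ⟨Stmt11.Fset T A r, hFm, ?_, ?_⟩
  · by_contra h0
    have hF0 : μ (Stmt11.Fset T A r) = 0 := by
      simpa [pos_iff_ne_zero, not_not] using h0
    have hsub : {x | Stmt11.Good T A x} ⊆ ⋃ t : ℕ, (T^[t]) ⁻¹' (Stmt11.Fset T A r) := by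
      intro x hG
      obtain ⟨t, ht⟩ := Stmt11.good_subset_union hr hdis hG
      exact Set.mem_iUnion.2 ⟨t, ht⟩
    have hun : μ (⋃ t : ℕ, (T^[t]) ⁻¹' (Stmt11.Fset T A r)) = 0 := by
      apply measure_iUnion_null
      intro t
      rw [(hT.toMeasurePreserving.iterate t).measure_preimage hFm.nullMeasurableSet]
      exact hF0
    have hmono := measure_mono (μ := μ) hsub
    rw [hGfull, hun] at hmono
    exact absurd hmono (by norm_num)
  · rw [MeasureTheory.ae_iff]
    have hnull : (ProbabilityTheory.cond μ (Stmt11.Fset T A r)) ((Stmt11.Fset T A r)ᶜ) = 0 := by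
      rw [ProbabilityTheory.cond]
      rw [Measure.smul_apply, Measure.restrict_apply hFm.compl]
      simp
    refine measure_mono_null ?_ hnull
    intro y hy
    simp only [Set.mem_setOf_eq] at hy
    simp only [Set.mem_compl_iff]
    intro hyF
    exact hy (Stmt11.returnTime_Fset hr hdis hyF)
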